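/- arXiv:math/0703156 — 2 statements merged into one kernel-verified Lean document; each statement's English description precedes it below -/
import Mathlib

section
/- Let P ⊆ ℝⁿ be a uniformly discrete set of finite local complexity and let φ : ℝⁿ → ℝⁿ be a differentiable function whose derivative map dφ is P-equivariant with range R > 0. Then for all r > 0 and all x, y ∈ ℝⁿ: if B_{R+r}[P − x] = B_{R+r}[P − y], then for all h ∈ B(0,r), φ(x + h) − φ(x) = φ(y + h) − φ(y). -/
open Metric Set

noncomputable section

/-- Euclidean space ℝⁿ. -/
abbrev Euc (n : ℕ) := EuclideanSpace ℝ (Fin n)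

/-- The translate `P - x = {p - x : p ∈ P}`. -/
def shiftSet {n : ℕ} (P : Set (Euc n)) (x : Euc n) : Set (Euc n) :=
  (fun p => p - x) '' P

/-- The `r`-patch of `P` around `x`: `B_r[P - x] = B(0,r) ∩ (P - x)`. -/
def patch {n : ℕ} (P : Set (Euc n)) (r : ℝ) (x : Euc n) : Set (Euc n) :=
  ball (0 : Euc n) r ∩ shiftSet P x

/-- `P` is uniformly discrete: there is a positive minimal distance between points. -/
def UnifDiscrete {n : ℕ} (P : Set (Euc n)) : Prop :=
  ∃ δ > 0, ∀ p ∈ P, ∀ q ∈ P, p ≠ q → δ ≤ ‖p - q‖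

/-- `P` is relatively dense: every ball of radius `R` contains a point of `P`. -/
def RelDense {n : ℕ} (P : Set (Euc n)) : Prop :=
  ∃ R > 0, ∀ x : Euc n, ∃ p ∈ P, ‖p - x‖ < R

/-- `P` has finite local complexity: for each `r > 0`, only finitely many `r`-patches
around points of `P`. -/
def FLC {n : ℕ} (P : Set (Euc n)) : Prop :=
  ∀ r > 0, {s : Set (Euc n) | ∃ x ∈ P, s = patch P r x}.Finite

/-- `f` is `P`-equivariant with range `R`. -/
def EquivRange {n : ℕ} {F : Type*} (P : Set (Euc n)) (R : ℝ) (f : Euc n → F) : Prop :=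
  ∀ x y : Euc n, patch P R x = patch P R y → f x = f y

/-- `f` is strongly `P`-equivariant: `P`-equivariant with some finite range `R > 0`. -/
def StrongEquiv {n : ℕ} {F : Type*} (P : Set (Euc n)) (f : Euc n → F) : Prop :=
  ∃ R > 0, EquivRange P R f

/-- `f`, viewed as a function on the subset `Q`, is `P`-equivariant with range `R`. -/
def EquivRangeOn {n : ℕ} {F : Type*} (P Q : Set (Euc n)) (R : ℝ) (f : Euc n → F) : Prop :=
  ∀ x ∈ Q, ∀ y ∈ Q, patch P R x = patch P R y → f x = f y

/-- `f`, viewed as a function on the subset `Q`, is strongly `P`-equivariant. -/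
def StrongEquivOn {n : ℕ} {F : Type*} (P Q : Set (Euc n)) (f : Euc n → F) : Prop :=
  ∃ R > 0, EquivRangeOn P Q R f

/-- `Q` is locally derivable from `P`. -/
def LocallyDerivable {n : ℕ} (P Q : Set (Euc n)) : Prop :=
  ∃ R > 0, ∀ x y : Euc n, patch P R x = patch P R y →
    ({0} : Set (Euc n)) ∩ shiftSet Q x = ({0} : Set (Euc n)) ∩ shiftSet Q y

/-- Hypothesis (H): for every `r > 0` there is `r' > 0` such that for all `x`,
`B(φ(x), r) ∩ φ(P) ⊆ φ(B(x, r') ∩ P)`. -/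
def HypoH {n : ℕ} (P : Set (Euc n)) (φ : Euc n → Euc n) : Prop :=
  ∀ r > 0, ∃ r' > 0, ∀ x : Euc n, ball (φ x) r ∩ (φ '' P) ⊆ φ '' (ball x r' ∩ P)

/-- The pattern metric `D` on closed subsets of ℝⁿ. -/
def patternDist {n : ℕ} (A B : Set (Euc n)) : ℝ :=
  sInf {ε : ℝ | 0 < ε ∧ Metric.hausdorffDist
    ((ball (0 : Euc n) (1 / ε) ∩ A) ∪ sphere (0 : Euc n) (1 / ε))
    ((ball (0 : Euc n) (1 / ε) ∩ B) ∪ sphere (0 : Euc n) (1 / ε)) ≤ ε}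

/-- A continuous `f : ℝⁿ → ℝⁿ` is weakly `P`-equivariant if it is uniformly approximated
by strongly `P`-equivariant continuous functions. -/
def WeakEquiv {n : ℕ} (P : Set (Euc n)) (f : Euc n → Euc n) : Prop :=
  ∀ ε > 0, ∃ g : Euc n → Euc n, Continuous g ∧ StrongEquiv P g ∧ ∀ x : Euc n, ‖f x - g x‖ < ε

/-- `P` is aperiodic: the only translation fixing `P` is `0`. -/
def IsAperiodicSet {n : ℕ} (P : Set (Euc n)) : Prop :=
  ∀ x : Euc n, shiftSet P x = P → x = 0



lemma mem_patch_iff {n : ℕ} {P : Set (Euc n)} {R : ℝ} {x z : Euc n} :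
    z ∈ patch P R x ↔ ‖z‖ < R ∧ z + x ∈ P := by
  simp only [patch, shiftSet, Set.mem_inter_iff, mem_ball, dist_zero_right, Set.mem_image]
  constructor
  · rintro ⟨h1, p, hp, rfl⟩
    exact ⟨h1, by simpa using hp⟩
  · rintro ⟨h1, h2⟩
    exact ⟨h1, z + x, h2, by abel⟩

lemma patch_shift_subset {n : ℕ} {P : Set (Euc n)} {R r : ℝ} {x y v : Euc n}
    (hv : ‖v‖ < r) (hxy : patch P (R + r) x = patch P (R + r) y) :
    patch P R (x + v) ⊆ patch P R (y + v) := by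
  intro z hz
  rw [mem_patch_iff] at hz ⊢
  refine ⟨hz.1, ?_⟩
  have hmem : z + v ∈ patch P (R + r) x := by
    rw [mem_patch_iff]
    constructor
    · calc ‖z + v‖ ≤ ‖z‖ + ‖v‖ := norm_add_le _ _
        _ < R + r := add_lt_add hz.1 hv
    · have := hz.2
      have : z + v + x = z + (x + v) := by abel
      rw [this]; exact hz.2
  rw [hxy, mem_patch_iff] at hmem
  have : z + v + y = z + (y + v) := by abel
  rw [this] at hmem
  exact hmem.2

lemma patch_shift_eq {n : ℕ} {P : Set (Euc n)} {R r : ℝ} {x y v : Euc n}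
    (hv : ‖v‖ < r) (hxy : patch P (R + r) x = patch P (R + r) y) :
    patch P R (x + v) = patch P R (y + v) :=
  Set.Subset.antisymm (patch_shift_subset hv hxy) (patch_shift_subset hv hxy.symm)

theorem stmt6 {n : ℕ} (P : Set (Euc n)) (hUD : UnifDiscrete P) (hFLC : FLC P)
    (φ : Euc n → Euc n) (hφ : Differentiable ℝ φ)
    (R : ℝ) (hR : 0 < R) (hdφ : EquivRange P R (fderiv ℝ φ)) :
    ∀ r > 0, ∀ x y : Euc n, patch P (R + r) x = patch P (R + r) y →
      ∀ h ∈ ball (0 : Euc n) r, φ (x + h) - φ x = φ (y + h) - φ y := by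
  intro r hr x y hxy h hh
  rw [mem_ball, dist_zero_right] at hh
  set f : Euc n → Euc n := fun z => φ (x + z) - φ (y + z) with hf
  have hderiv : ∀ z : Euc n, HasFDerivAt f
      ((fderiv ℝ φ (x + z)) - (fderiv ℝ φ (y + z))) z := by
    intro z
    have h0x : HasFDerivAt (fun z : Euc n => x + z) (ContinuousLinearMap.id ℝ (Euc n)) z :=
      (hasFDerivAt_id z).const_add x
    have h0y : HasFDerivAt (fun z : Euc n => y + z) (ContinuousLinearMap.id ℝ (Euc n)) z :=
      (hasFDerivAt_id z).const_add y
    have hx' : HasFDerivAt (fun z : Euc n => φ (x + z)) (fderiv ℝ φ (x + z)) z := by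
      simpa [Function.comp_def] using ((hφ (x + z)).hasFDerivAt.comp z h0x)
    have hy' : HasFDerivAt (fun z : Euc n => φ (y + z)) (fderiv ℝ φ (y + z)) z := by
      simpa [Function.comp_def] using ((hφ (y + z)).hasFDerivAt.comp z h0y)
    exact hx'.sub hy'
  have hdiff : Differentiable ℝ f := fun z => (hderiv z).differentiableAt
  have hzero : ∀ z ∈ ball (0 : Euc n) r, fderivWithin ℝ f (ball (0 : Euc n) r) z = 0 := by
    intro z hz
    rw [mem_ball, dist_zero_right] at hz
    have heq : fderiv ℝ φ (x + z) = fderiv ℝ φ (y + z) :=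
      hdφ (x + z) (y + z) (patch_shift_eq hz hxy)
    have : fderiv ℝ f z = 0 := by
      rw [(hderiv z).fderiv, heq, sub_self]
    rw [fderivWithin_of_isOpen isOpen_ball (by simpa [mem_ball, dist_zero_right] using hz)]
    exact this
  have hconst : f h = f 0 :=
    (convex_ball (0 : Euc n) r).is_const_of_fderivWithin_eq_zero
      hdiff.differentiableOn hzero
      (by simpa [mem_ball, dist_zero_right] using hh) (mem_ball_self hr)
  simp only [hf, add_zero] at hconst
  have : φ (x + h) - φ (y + h) = φ x - φ y := hconst
  have := congrArg (fun w => w + (φ (y + h) - φ x)) this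
  simpa using sub_eq_sub_iff_sub_eq_sub.mp hconst
end
end

section
/- Let P ⊆ ℝⁿ be a uniformly discrete set which is aperiodic, i.e. P − x = P implies x = 0. Then for every M > 0 there exists r > 0 such that for all h ∈ ℝⁿ with |h| ≤ M: B_r[P] = B_r[P − h] implies h = 0. -/
open Metric Set

noncomputable section

lemma mem_patch {n : ℕ} (P : Set (Euc n)) (r : ℝ) (x q : Euc n) :
    q ∈ patch P r x ↔ ‖q‖ < r ∧ q + x ∈ P := by
  constructor
  · rintro ⟨hb, p, hp, rfl⟩
    exact ⟨by simpa using mem_ball_zero_iff.1 hb, by simpa using hp⟩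
  · rintro ⟨hb, hp⟩
    exact ⟨mem_ball_zero_iff.2 hb, q + x, hp, by simp⟩

theorem stmt13 {n : ℕ} (P : Set (Euc n))
    (hUD : UnifDiscrete P) (hAp : IsAperiodicSet P) :
    ∀ M > 0, ∃ r > 0, ∀ h : Euc n, ‖h‖ ≤ M →
      patch P r 0 = patch P r h → h = 0 := by
  intro M hM
  obtain ⟨δ, hδ, hsep⟩ := hUD
  by_contra hcon
  push_neg at hcon
  choose h hle heq hne using fun k : ℕ => hcon ((k : ℝ) + 1) (by positivity)
  have key : ∀ k : ℕ, ∀ q : Euc n, ‖q‖ < (k : ℝ) + 1 → (q ∈ P ↔ q + h k ∈ P) := by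
    intro k q hq
    constructor
    · intro hqP
      have h1 : q ∈ patch P ((k : ℝ) + 1) (0 : Euc n) :=
        (mem_patch P _ 0 q).2 ⟨hq, by simpa using hqP⟩
      rw [heq k] at h1
      exact ((mem_patch P _ (h k) q).1 h1).2
    · intro hqP
      have h1 : q ∈ patch P ((k : ℝ) + 1) (h k) :=
        (mem_patch P _ (h k) q).2 ⟨hq, hqP⟩
      rw [← heq k] at h1
      simpa using ((mem_patch P _ 0 q).1 h1).2
  have hPne : P.Nonempty := by
    rcases eq_empty_or_nonempty P with hE | hne'
    · exact absurd (hAp (h 0) (by rw [hE]; simp [shiftSet])) (hne 0)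
    · exact hne'
  obtain ⟨p₀, hp₀⟩ := hPne
  have hcpt : IsCompact (closedBall (0 : Euc n) M) := isCompact_closedBall _ _
  have hmem : ∀ k, h k ∈ closedBall (0 : Euc n) M := fun k =>
    mem_closedBall_zero_iff.2 (hle k)
  obtain ⟨x, hx, φ, hφ, hlim⟩ := hcpt.tendsto_subseq hmem
  rw [Metric.tendsto_atTop] at hlim
  obtain ⟨N, hN⟩ := hlim (δ / 2) (by positivity)
  set N₁ : ℕ := max N ⌈‖p₀‖⌉₊ with hN₁def
  have hp₀lt : ∀ j : ℕ, N₁ ≤ j → ‖p₀‖ < (φ j : ℝ) + 1 := by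
    intro j hj
    have h1 : ‖p₀‖ ≤ (⌈‖p₀‖⌉₊ : ℝ) := Nat.le_ceil _
    have h2 : (⌈‖p₀‖⌉₊ : ℝ) ≤ (j : ℝ) := by
      exact_mod_cast le_trans (le_max_right N _) hj
    have h3 : (j : ℝ) ≤ (φ j : ℝ) := by exact_mod_cast hφ.le_apply
    linarith
  have hconst : ∀ j, N₁ ≤ j → h (φ j) = h (φ N₁) := by
    intro j hj
    by_contra hne'
    have ha : p₀ + h (φ j) ∈ P := (key _ p₀ (hp₀lt j hj)).1 hp₀
    have hb : p₀ + h (φ N₁) ∈ P := (key _ p₀ (hp₀lt N₁ le_rfl)).1 hp₀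
    have hd : δ ≤ ‖(p₀ + h (φ j)) - (p₀ + h (φ N₁))‖ :=
      hsep _ ha _ hb (by simpa using hne')
    rw [add_sub_add_left_eq_sub] at hd
    have d1 : dist (h (φ j)) x < δ / 2 := hN j (le_trans (le_max_left _ _) hj)
    have d2 : dist (h (φ N₁)) x < δ / 2 := hN N₁ (le_max_left _ _)
    have : dist (h (φ j)) (h (φ N₁)) < δ := by
      calc dist (h (φ j)) (h (φ N₁)) ≤ dist (h (φ j)) x + dist x (h (φ N₁)) :=
            dist_triangle _ _ _
        _ < δ := by rw [dist_comm x]; linarith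
    rw [dist_eq_norm] at this
    linarith
  set y : Euc n := h (φ N₁) with hydef
  have hper : shiftSet P y = P := by
    ext q
    constructor
    · rintro ⟨p, hp, rfl⟩
      set j : ℕ := max N₁ ⌈‖p - y‖⌉₊ with hjdef
      have hlt : ‖p - y‖ < (φ j : ℝ) + 1 := by
        have h1 : ‖p - y‖ ≤ (⌈‖p - y‖⌉₊ : ℝ) := Nat.le_ceil _
        have h2 : (⌈‖p - y‖⌉₊ : ℝ) ≤ (j : ℝ) := by
          exact_mod_cast le_max_right N₁ _
        have h3 : (j : ℝ) ≤ (φ j : ℝ) := by exact_mod_cast hφ.le_apply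
        linarith
      have hkey := key (φ j) (p - y) hlt
      rw [hconst j (le_max_left _ _)] at hkey
      exact hkey.2 (by simpa using hp)
    · intro hq
      set j : ℕ := max N₁ ⌈‖q‖⌉₊ with hjdef
      have hlt : ‖q‖ < (φ j : ℝ) + 1 := by
        have h1 : ‖q‖ ≤ (⌈‖q‖⌉₊ : ℝ) := Nat.le_ceil _
        have h2 : (⌈‖q‖⌉₊ : ℝ) ≤ (j : ℝ) := by
          exact_mod_cast le_max_right N₁ _
        have h3 : (j : ℝ) ≤ (φ j : ℝ) := by exact_mod_cast hφ.le_apply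
        linarith
      have hkey := key (φ j) q hlt
      rw [hconst j (le_max_left _ _)] at hkey
      exact ⟨q + y, hkey.1 hq, by simp⟩
  exact hne (φ N₁) (hAp y hper)
end
end
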